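/- Let (M,𝓜,m) be a probability space, let D₀ ⊇ D₁ ⊇ D₂ ⊇ … be a decreasing sequence of measurable sets with lim_{N→∞} m(D_N) = 0, let 𝓘 ⊆ 𝓜 be a sub-σ-algebra, and define 𝓖_N := 𝓘 ∨ σ({A ∈ 𝓜 : A ⊆ D_N}) and 𝓝 := {A ∈ 𝓜 : m(A) = 0}. Then ⋂_{N=0}^∞ (𝓖_N ∨ 𝓝) ⊆ 𝓘 ∨ 𝓝. -/

import Mathlib

open MeasureTheory Set Filter

/-- Sets approximable by `𝓘`-measurable sets up to a subset of `S`, as a σ-algebra. -/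
def approxSA {M : Type*} [mX : MeasurableSpace M] (𝓘 : MeasurableSpace M) (μ : @Measure M mX)
    (S : Set M) : MeasurableSpace M where
  MeasurableSet' A := ∃ B, MeasurableSet[𝓘] B ∧ μ (symmDiff A B \ S) = 0
  measurableSet_empty := ⟨∅, MeasurableSet.empty, by simp⟩
  measurableSet_compl := fun A ⟨B, hB, h⟩ => ⟨Bᶜ, hB.compl, by rwa [compl_symmDiff_compl]⟩
  measurableSet_iUnion := fun f hf => by
    choose B hB hμ using hf
    refine ⟨⋃ i, B i, MeasurableSet.iUnion hB,
      measure_mono_null ?_ (measure_iUnion_null (s := fun i => symmDiff (f i) (B i) \ S) hμ)⟩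
    rw [← Set.iUnion_diff]
    refine Set.diff_subset_diff_left ?_
    intro x hx
    rcases Set.mem_symmDiff.mp hx with ⟨hx1, hx2⟩ | ⟨hx1, hx2⟩ <;>
      simp only [Set.mem_iUnion] at hx1 hx2 ⊢ <;> obtain ⟨i, hi⟩ := hx1 <;>
      exact ⟨i, Set.mem_symmDiff.mpr (by tauto)⟩

/-- Let `(M,𝓜,m)` be a probability space, `D₀ ⊇ D₁ ⊇ …` measurable sets with
`m (D N) → 0`, `𝓘 ⊆ 𝓜` a sub-σ-algebra, `𝓖_N := 𝓘 ∨ σ(A ∈ 𝓜 : A ⊆ D N)` and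
`𝓝 := σ(A ∈ 𝓜 : m A = 0)`. Then `⋂_N (𝓖_N ∨ 𝓝) ⊆ 𝓘 ∨ 𝓝`. -/
theorem stmt8 {M : Type*} [mM : MeasurableSpace M] (μ : Measure M) [IsProbabilityMeasure μ]
    (D : ℕ → Set M) (hDmeas : ∀ N, MeasurableSet (D N)) (hDanti : Antitone D)
    (hlim : Filter.Tendsto (fun N => μ (D N)) Filter.atTop (nhds 0))
    (𝓘 : MeasurableSpace M) (h𝓘 : 𝓘 ≤ mM) :
    (⨅ N : ℕ, (𝓘 ⊔ MeasurableSpace.generateFrom {A : Set M | MeasurableSet[mM] A ∧ A ⊆ D N}) ⊔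
        MeasurableSpace.generateFrom {A : Set M | MeasurableSet[mM] A ∧ μ A = 0}) ≤
      𝓘 ⊔ MeasurableSpace.generateFrom {A : Set M | MeasurableSet[mM] A ∧ μ A = 0} := by
  intro A hA
  -- A is measurable for the ambient σ-algebra
  have hLHS : (⨅ N : ℕ, (𝓘 ⊔ MeasurableSpace.generateFrom
      {A : Set M | MeasurableSet[mM] A ∧ A ⊆ D N}) ⊔
      MeasurableSpace.generateFrom {A : Set M | MeasurableSet[mM] A ∧ μ A = 0}) ≤ mM :=
    le_trans (iInf_le _ 0) (sup_le (sup_le h𝓘 (MeasurableSpace.generateFrom_le fun s hs => hs.1))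
      (MeasurableSpace.generateFrom_le fun s hs => hs.1))
  have hAm : MeasurableSet[mM] A := hLHS A hA
  have hA' : ∀ N : ℕ, MeasurableSet[(𝓘 ⊔ MeasurableSpace.generateFrom
      {A : Set M | MeasurableSet[mM] A ∧ A ⊆ D N}) ⊔
      MeasurableSpace.generateFrom {A : Set M | MeasurableSet[mM] A ∧ μ A = 0}] A := by
    intro N
    have hle : (⨅ N : ℕ, (𝓘 ⊔ MeasurableSpace.generateFrom
        {A : Set M | MeasurableSet[mM] A ∧ A ⊆ D N}) ⊔
        MeasurableSpace.generateFrom {A : Set M | MeasurableSet[mM] A ∧ μ A = 0}) ≤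
        (𝓘 ⊔ MeasurableSpace.generateFrom {A : Set M | MeasurableSet[mM] A ∧ A ⊆ D N}) ⊔
        MeasurableSpace.generateFrom {A : Set M | MeasurableSet[mM] A ∧ μ A = 0} := iInf_le _ N
    exact hle A hA
  -- for each N, A is approximable up to a subset of D N
  have hap : ∀ N, ∃ B, MeasurableSet[𝓘] B ∧ μ (symmDiff A B \ D N) = 0 := by
    intro N
    have h1 : (𝓘 ⊔ MeasurableSpace.generateFrom {A : Set M | MeasurableSet[mM] A ∧ A ⊆ D N}) ⊔
        MeasurableSpace.generateFrom {A : Set M | MeasurableSet[mM] A ∧ μ A = 0} ≤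
        @approxSA M mM 𝓘 μ (D N) := by
      refine sup_le (sup_le ?_ ?_) ?_
      · intro s hs; exact ⟨s, hs, by simp⟩
      · refine MeasurableSpace.generateFrom_le fun s hs => ⟨∅, MeasurableSet.empty, ?_⟩
        have h2 : symmDiff s ∅ \ D N = ∅ := by
          have : symmDiff s ∅ = s := by simp
          rw [this]
          exact Set.diff_eq_empty.mpr hs.2
        simp [h2]
      · refine MeasurableSpace.generateFrom_le fun s hs => ⟨∅, MeasurableSet.empty, ?_⟩
        refine measure_mono_null ?_ hs.2
        have : symmDiff s ∅ = s := by simp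
        rw [this]
        exact Set.diff_subset
    exact h1 A (hA' N)
  -- choose a subsequence with summable measures
  have hsel : ∀ k : ℕ, ∃ N, μ (D N) ≤ 2⁻¹ ^ k := by
    intro k
    obtain ⟨N, hN⟩ := ENNReal.tendsto_atTop_zero.mp hlim (2⁻¹ ^ k)
      (ENNReal.pow_pos (by norm_num) k)
    exact ⟨N, hN N le_rfl⟩
  choose φ hφ using hsel
  choose B hB hμB using fun k => hap (φ k)
  have hABk : ∀ k, μ (symmDiff A (B k)) ≤ 2⁻¹ ^ k := by
    intro k
    calc μ (symmDiff A (B k)) ≤ μ (symmDiff A (B k) \ D (φ k) ∪ D (φ k)) :=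
          measure_mono (Set.subset_diff_union _ _)
      _ ≤ μ (symmDiff A (B k) \ D (φ k)) + μ (D (φ k)) := measure_union_le _ _
      _ ≤ 2⁻¹ ^ k := by rw [hμB k, zero_add]; exact hφ k
  -- take the limsup of the Bs
  set Bs : Set M := ⋂ n, ⋃ k, ⋃ (_ : n ≤ k), B k with hBsdef
  have hBs : MeasurableSet[𝓘] Bs :=
    MeasurableSet.iInter fun n => MeasurableSet.iUnion fun k => MeasurableSet.iUnion fun _ => hB k
  have hsub : ∀ n, symmDiff A Bs ⊆ ⋃ k, ⋃ (_ : n ≤ k), symmDiff A (B k) := by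
    intro n x hx
    rcases Set.mem_symmDiff.mp hx with ⟨hxA, hxB⟩ | ⟨hxB, hxA⟩
    · simp only [hBsdef, Set.mem_iInter, Set.mem_iUnion, not_forall, not_exists] at hxB
      obtain ⟨m, hm⟩ := hxB
      simp only [Set.mem_iUnion]
      exact ⟨max n m, le_max_left _ _,
        Set.mem_symmDiff.mpr (Or.inl ⟨hxA, hm _ (le_max_right _ _)⟩)⟩
    · have := Set.mem_iInter.mp hxB n
      simp only [Set.mem_iUnion] at this ⊢
      obtain ⟨k, hk, hxk⟩ := this
      exact ⟨k, hk, Set.mem_symmDiff.mpr (Or.inr ⟨hxk, hxA⟩)⟩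
  have hbound : ∀ n, μ (symmDiff A Bs) ≤ 2⁻¹ ^ n * 2 := by
    intro n
    have hsub2 : symmDiff A Bs ⊆ ⋃ j : ℕ, symmDiff A (B (n + j)) := by
      intro x hx
      obtain ⟨k, hk⟩ := Set.mem_iUnion.mp (hsub n hx)
      simp only [Set.mem_iUnion] at hk
      obtain ⟨hnk, hxk⟩ := hk
      exact Set.mem_iUnion.mpr ⟨k - n, by rwa [Nat.add_sub_cancel' hnk]⟩
    calc μ (symmDiff A Bs) ≤ μ (⋃ j : ℕ, symmDiff A (B (n + j))) := measure_mono hsub2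
      _ ≤ ∑' j : ℕ, μ (symmDiff A (B (n + j))) := measure_iUnion_le _
      _ ≤ ∑' j : ℕ, 2⁻¹ ^ (n + j) := ENNReal.tsum_le_tsum fun j => hABk _
      _ = 2⁻¹ ^ n * ∑' j : ℕ, 2⁻¹ ^ j := by
          rw [← ENNReal.tsum_mul_left]
          congr 1
          ext j
          rw [pow_add]
      _ = 2⁻¹ ^ n * 2 := by
          rw [ENNReal.tsum_geometric]
          norm_num
  have hzero : μ (symmDiff A Bs) = 0 := by
    have ht : Tendsto (fun n : ℕ => (2⁻¹ : ENNReal) ^ n * 2) atTop (nhds 0) := by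
      have h1 := ENNReal.tendsto_pow_atTop_nhds_zero_of_lt_one
        (by norm_num : (2⁻¹ : ENNReal) < 1)
      simpa using ENNReal.Tendsto.mul_const h1 (Or.inr (by norm_num))
    exact le_antisymm (ge_of_tendsto' ht hbound) zero_le
  -- conclude
  have hBsm : MeasurableSet[mM] Bs := h𝓘 _ hBs
  have hsupL : 𝓘 ≤ 𝓘 ⊔ MeasurableSpace.generateFrom
      {A : Set M | MeasurableSet[mM] A ∧ μ A = 0} := le_sup_left
  have hsupR : MeasurableSpace.generateFrom {A : Set M | MeasurableSet[mM] A ∧ μ A = 0} ≤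
      𝓘 ⊔ MeasurableSpace.generateFrom {A : Set M | MeasurableSet[mM] A ∧ μ A = 0} :=
    le_sup_right
  have hd1 : MeasurableSet[𝓘 ⊔ MeasurableSpace.generateFrom
      {A : Set M | MeasurableSet[mM] A ∧ μ A = 0}] (Bs \ A) :=
    hsupR _ (MeasurableSpace.measurableSet_generateFrom ⟨hBsm.diff hAm,
      measure_mono_null (fun x hx => Set.mem_symmDiff.mpr (Or.inr ⟨hx.1, hx.2⟩)) hzero⟩)
  have hd2 : MeasurableSet[𝓘 ⊔ MeasurableSpace.generateFrom
      {A : Set M | MeasurableSet[mM] A ∧ μ A = 0}] (A \ Bs) :=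
    hsupR _ (MeasurableSpace.measurableSet_generateFrom ⟨hAm.diff hBsm,
      measure_mono_null (fun x hx => Set.mem_symmDiff.mpr (Or.inl ⟨hx.1, hx.2⟩)) hzero⟩)
  have hBsup : MeasurableSet[𝓘 ⊔ MeasurableSpace.generateFrom
      {A : Set M | MeasurableSet[mM] A ∧ μ A = 0}] Bs := hsupL _ hBs
  have hrepr : A = (Bs \ (Bs \ A)) ∪ (A \ Bs) := by
    ext x
    simp only [Set.mem_union, Set.mem_diff, not_and, not_not]
    tauto
  rw [hrepr]
  exact ((hBsup.diff hd1).union hd2)
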